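/- For all real numbers a ≥ 0 and b ≥ 0, the function f(t) = cosh(√(a·t² + b)) of the real variable t is exponentially convex. -/

import Mathlib

open ComplexOrder

/-- A function `f : ℝ → ℝ` is exponentially convex if it is continuous and all the
quadratic forms `∑ f(t_r + t_s) ξ_r conj(ξ_s)` are nonnegative (real). -/
def ExpConvex (f : ℝ → ℝ) : Prop :=
  Continuous f ∧ ∀ (N : ℕ) (t : Fin N → ℝ) (ξ : Fin N → ℂ),
    0 ≤ ∑ r, ∑ s, (f (t r + t s) : ℂ) * ξ r * (starRingEnd ℂ) (ξ s)

open MeasureTheory intervalIntegral Real Finset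

noncomputable def co (b : ℝ) (j : ℕ) : ℝ :=
  b^(j+1) / (4^(j+1) * ((j+1).factorial * j.factorial))

noncomputable def trm (b : ℝ) (s : ℝ) (p : ℕ × ℕ) : ℝ :=
  ((p.1+p.2).choose p.1 : ℝ) * b^p.2 * s^(2*p.1) / ((2*p.1+2*p.2).factorial)

noncomputable def Gb (j : ℕ) (s : ℝ) : ℝ := ∫ u in (-1:ℝ)..1, Real.exp (s*u) * (1-u^2)^j

lemma J_odd_zero (m j : ℕ) (hm : Odd m) :
    ∫ u in (-1:ℝ)..1, u^m * (1-u^2)^j = 0 := by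
  have h := intervalIntegral.integral_comp_neg (a := -1) (b := 1)
    (fun x : ℝ => x^m * (1-x^2)^j)
  have heq : ∀ x : ℝ, (-x)^m * (1-(-x)^2)^j = -(x^m * (1-x^2)^j) := by
    intro x
    rw [hm.neg_pow, neg_pow, Even.neg_one_pow (by norm_num)]
    ring
  simp only [heq, neg_neg, intervalIntegral.integral_neg] at h
  linarith

lemma I_rec (n j : ℕ) :
    ∫ u in (-1:ℝ)..1, u^(2*n) * (1-u^2)^(j+1)
      = (2*(j:ℝ)+2)/(2*(n:ℝ)+1) * ∫ u in (-1:ℝ)..1, u^(2*n+2) * (1-u^2)^j := by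
  have hu : ∀ x ∈ Set.uIcc (-1:ℝ) 1, HasDerivAt (fun y : ℝ => (1-y^2)^(j+1))
      (((j:ℝ)+1) * (1-x^2)^j * (-(2*x))) x := by
    intro x _
    have h1 : HasDerivAt (fun y : ℝ => 1-y^2) (-(2*x)) x := by
      simpa using ((hasDerivAt_pow 2 x).const_sub 1)
    have h2 := h1.fun_pow (j+1)
    have : ((j:ℝ)+1) * (1-x^2)^(j+1-1) * (-(2*x)) = ((j:ℝ)+1) * (1-x^2)^j * (-(2*x)) := by
      norm_num
    rw [← this]
    exact h2.congr_deriv (by norm_cast)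
  have hv : ∀ x ∈ Set.uIcc (-1:ℝ) 1, HasDerivAt (fun y : ℝ => y^(2*n+1)/(2*(n:ℝ)+1))
      (x^(2*n)) x := by
    intro x _
    have h2 := (hasDerivAt_pow (2*n+1) x).div_const (2*(n:ℝ)+1)
    have : (((2*n+1 : ℕ)):ℝ) * x ^ (2*n+1-1) / (2*(n:ℝ)+1) = x^(2*n) := by
      push_cast
      have hne : 2*(n:ℝ)+1 ≠ 0 := by positivity
      field_simp
    rwa [this] at h2
  have hIu : IntervalIntegrable (fun x : ℝ => ((j:ℝ)+1) * (1-x^2)^j * (-(2*x))) volume (-1) 1 :=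
    (by fun_prop : Continuous fun x : ℝ => ((j:ℝ)+1) * (1-x^2)^j * (-(2*x))).intervalIntegrable _ _
  have hIv : IntervalIntegrable (fun x : ℝ => x^(2*n)) volume (-1) 1 :=
    (by fun_prop : Continuous fun x : ℝ => x^(2*n)).intervalIntegrable _ _
  have h := intervalIntegral.integral_mul_deriv_eq_deriv_mul hu hv hIu hIv
  -- h : ∫ x in -1..1, (1-x^2)^(j+1) * x^(2*n) = 0*... - 0*... - ∫ x in -1..1, ((j+1)*(1-x^2)^j*(-(2x))) * (x^(2n+1)/(2n+1))
  have e1 : ∫ x in (-1:ℝ)..1, x^(2*n) * (1-x^2)^(j+1)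
      = ∫ x in (-1:ℝ)..1, (1-x^2)^(j+1) * x^(2*n) := by
    apply intervalIntegral.integral_congr; intro x _; ring
  have e2 : ∫ x in (-1:ℝ)..1, (((j:ℝ)+1) * (1-x^2)^j * (-(2*x))) * (x^(2*n+1)/(2*(n:ℝ)+1))
      = (-(2*(j:ℝ)+2)/(2*(n:ℝ)+1)) * ∫ x in (-1:ℝ)..1, x^(2*n+2) * (1-x^2)^j := by
    rw [← intervalIntegral.integral_const_mul]
    apply intervalIntegral.integral_congr; intro x _
    have hne : 2*(n:ℝ)+1 ≠ 0 := by positivity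
    field_simp
    ring
  rw [e1, h, e2]
  norm_num
  try ring

lemma I_closed : ∀ (j n : ℕ), ∫ u in (-1:ℝ)..1, u^(2*n) * (1-u^2)^j
    = 4^(j+1) * (j.factorial : ℝ) * ((n+j+1).factorial) * ((2*n).factorial)
      / ((n.factorial) * ((2*n+2*j+2).factorial)) := by
  intro j
  induction j with
  | zero =>
    intro n
    simp only [pow_zero, mul_one, integral_pow]
    have h1 : (2*n+2*0+2) = (2*n+1)+1 := by ring
    have h2 : ((2*n+1)+1).factorial = ((2*n+1)+1) * ((2*n)+1) * (2*n).factorial := by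
      rw [Nat.factorial_succ, Nat.factorial_succ]; ring
    rw [h1, h2]
    have h3 : (n+0+1) = n+1 := by ring
    rw [h3, Nat.factorial_succ]
    have hne1 : ((2*n:ℕ):ℝ)+1 ≠ 0 := by positivity
    have hne2 : ((2*n).factorial : ℝ) ≠ 0 := by positivity
    have hne3 : ((n).factorial : ℝ) ≠ 0 := by positivity
    push_cast
    rw [Odd.neg_pow ⟨n, by ring⟩]
    field_simp
    ring
  | succ j ih =>
    intro n
    rw [I_rec n j]
    have h4 : 2*n+2 = 2*(n+1) := by ring
    rw [h4, ih (n+1)]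
    have e1 : n+1+j+1 = n+(j+1)+1 := by ring
    have e2 : 2*(n+1)+2*j+2 = 2*n+2*(j+1)+2 := by ring
    rw [e1, e2]
    have h5 : ((2*(n+1)).factorial : ℝ) = (2*n+2) * (2*n+1) * (2*n).factorial := by
      have : 2*(n+1) = (2*n+1)+1 := by ring
      rw [this, Nat.factorial_succ, Nat.factorial_succ]
      push_cast; ring
    have h6 : ((n+1).factorial : ℝ) = (n+1) * n.factorial := by
      rw [Nat.factorial_succ]; push_cast; ring
    have h7 : ((j+1).factorial : ℝ) = (j+1) * j.factorial := by
      rw [Nat.factorial_succ]; push_cast; ring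
    rw [h5, h6, h7]
    have hne1 : (2*(n:ℝ)+1) ≠ 0 := by positivity
    have hne2 : ((2*n).factorial : ℝ) ≠ 0 := by positivity
    have hne3 : ((n).factorial : ℝ) ≠ 0 := by positivity
    have hne4 : ((2*n+2*(j+1)+2).factorial : ℝ) ≠ 0 := by positivity
    have hne5 : ((n:ℝ)+1) ≠ 0 := by positivity
    push_cast
    field_simp
    ring

lemma hasSum_exp_real (x : ℝ) : HasSum (fun n => x^n / n.factorial) (Real.exp x) := by
  rw [Real.exp_eq_exp_ℝ]
  exact NormedSpace.expSeries_div_hasSum_exp x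

lemma hasSum_G (j : ℕ) (s : ℝ) :
    HasSum (fun n : ℕ => s^(2*n)/((2*n).factorial) * ∫ u in (-1:ℝ)..1, u^(2*n)*(1-u^2)^j)
      (Gb j s) := by
  unfold Gb
  have h12 : (-1:ℝ) ≤ 1 := by norm_num
  have key : HasSum (fun m : ℕ => s^m/(m.factorial) * ∫ u in (-1:ℝ)..1, u^m*(1-u^2)^j)
      (∫ u in (-1:ℝ)..1, Real.exp (s*u) * (1-u^2)^j) := by
    rw [intervalIntegral.integral_of_le h12]
    have hmain : HasSum
        (fun m : ℕ => ∫ u in Set.Ioc (-1:ℝ) 1, (s*u)^m/(m.factorial) * (1-u^2)^j)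
        (∫ u in Set.Ioc (-1:ℝ) 1, Real.exp (s*u) * (1-u^2)^j) := by
      apply MeasureTheory.hasSum_integral_of_dominated_convergence
        (bound := fun m _ => |s|^m / m.factorial)
      · intro m
        exact (by fun_prop :
          Continuous fun u : ℝ => (s*u)^m/(m.factorial) * (1-u^2)^j).aestronglyMeasurable
      · intro m
        filter_upwards [ae_restrict_mem measurableSet_Ioc] with u hu
        have hu1 : |u| ≤ 1 := abs_le.2 ⟨le_of_lt hu.1, hu.2⟩
        have h1 : (0:ℝ) ≤ 1 - u^2 := by nlinarith [hu.1, hu.2]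
        have h2 : (1:ℝ) - u^2 ≤ 1 := by nlinarith [sq_nonneg u]
        have habs : |(s*u)^m/(m.factorial) * (1-u^2)^j|
            = |s*u|^m/(m.factorial) * (1-u^2)^j := by
          rw [abs_mul, abs_div, abs_pow, abs_pow, abs_of_nonneg h1, Nat.abs_cast]
        rw [Real.norm_eq_abs, habs]
        have hsu : |s*u| ≤ |s| := by
          rw [abs_mul]
          nlinarith [abs_nonneg s, abs_nonneg u]
        have hpow : |s*u|^m ≤ |s|^m := pow_le_pow_left₀ (abs_nonneg _) hsu m
        have hp1 : (1-u^2)^j ≤ 1 := pow_le_one₀ h1 h2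
        have hd : |s*u|^m/(m.factorial:ℝ) ≤ |s|^m/(m.factorial:ℝ) := by gcongr ?_/(m.factorial:ℝ)
        calc |s*u|^m/(m.factorial) * (1-u^2)^j ≤ |s|^m/(m.factorial) * 1 :=
              mul_le_mul hd hp1 (by positivity) (by positivity)
          _ = |s|^m/(m.factorial) := mul_one _
      · exact Filter.Eventually.of_forall fun _ => Real.summable_pow_div_factorial |s|
      · exact integrable_const _
      · filter_upwards with u
        exact (hasSum_exp_real (s*u)).mul_right ((1-u^2)^j)
    have heq : ∀ m : ℕ, (∫ u in Set.Ioc (-1:ℝ) 1, (s*u)^m/(m.factorial) * (1-u^2)^j)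
        = s^m/(m.factorial) * ∫ u in (-1:ℝ)..1, u^m*(1-u^2)^j := by
      intro m
      rw [intervalIntegral.integral_of_le h12]
      rw [← MeasureTheory.integral_const_mul]
      congr 1
      funext u
      rw [mul_pow]
      ring
    exact hmain.congr_fun (fun m => (heq m).symm)
  -- even/odd split
  set g : ℕ → ℝ := fun m => s^m/(m.factorial) * ∫ u in (-1:ℝ)..1, u^m*(1-u^2)^j with hg
  have heven : Summable (fun k => g (2*k)) :=
    key.summable.comp_injective (fun a b hab => by omega)
  have hodd : HasSum (fun k => g (2*k+1)) 0 := by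
    have : (fun k => g (2*k+1)) = fun _ => (0:ℝ) := by
      funext k
      rw [hg]
      simp only
      rw [J_odd_zero _ j ⟨k, by ring⟩, mul_zero]
    rw [this]
    exact hasSum_zero
  have hA := heven.hasSum
  have huniq := (hA.even_add_odd hodd).unique key
  rw [add_zero] at huniq
  rw [← huniq]
  exact hA

lemma trm_nonneg {b : ℝ} (hb : 0 ≤ b) (s : ℝ) (p : ℕ × ℕ) : 0 ≤ trm b s p := by
  unfold trm
  have : (0:ℝ) ≤ s^(2*p.1) := by rw [pow_mul]; positivity
  positivity

lemma trm_summable {b : ℝ} (hb : 0 ≤ b) (s : ℝ) : Summable (trm b s) := by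
  have hf : Summable (fun n : ℕ => (s^2)^n / n.factorial) :=
    Real.summable_pow_div_factorial (s^2)
  have hg : Summable (fun n : ℕ => b^n / n.factorial) :=
    Real.summable_pow_div_factorial b
  have hfg := hf.mul_of_nonneg hg (fun n => by positivity) (fun n => by positivity)
  apply Summable.of_nonneg_of_le (trm_nonneg hb s) _ hfg
  rintro ⟨n, j⟩
  unfold trm
  simp only
  have hkey : ((n+j).choose n : ℝ) * (n.factorial * j.factorial) ≤ ((2*n+2*j).factorial) := by
    have h1 : (n+j).choose n * (n.factorial * j.factorial) = (n+j).factorial := by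
      have h := Nat.add_choose_mul_factorial_mul_factorial n j
      rw [Nat.choose_symm_add, ← h]
      ring
    have h2 : (n+j).factorial ≤ (2*n+2*j).factorial :=
      Nat.factorial_le (by omega)
    calc ((n+j).choose n : ℝ) * (n.factorial * j.factorial)
        = ((n+j).choose n * (n.factorial * j.factorial) : ℕ) := by push_cast; try ring
      _ = ((n+j).factorial : ℕ) := by exact_mod_cast congrArg (Nat.cast (R := ℝ)) h1
      _ ≤ ((2*n+2*j).factorial : ℕ) := by exact_mod_cast h2
  have hs2 : (0:ℝ) ≤ s^(2*n) := by rw [pow_mul]; positivity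
  have hpos1 : (0:ℝ) < (2*n+2*j).factorial := by positivity
  have hpos2 : (0:ℝ) < n.factorial * j.factorial := by positivity
  rw [div_mul_div_comm, pow_mul]
  rw [div_le_div_iff₀ hpos1 hpos2]
  calc ((n+j).choose n : ℝ) * b^j * (s^2)^n * (n.factorial * j.factorial)
      = ((s^2)^n * b^j) * (((n+j).choose n : ℝ) * (n.factorial * j.factorial)) := by ring
    _ ≤ ((s^2)^n * b^j) * ((2*n+2*j).factorial) := by
        apply mul_le_mul_of_nonneg_left hkey (by positivity)
    _ = (s^2)^n * b^j * ((2*n+2*j).factorial) := by ring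

lemma key_hasSum {b : ℝ} (hb : 0 ≤ b) (s : ℝ) :
    HasSum (fun j : ℕ => co b j * Gb j s)
      (Real.cosh (Real.sqrt (s^2+b)) - Real.cosh s) := by
  have hsumm := trm_summable hb s
  -- step 1 : HasSum (trm b s) (cosh √(s²+b))
  have h1 : HasSum (trm b s) (Real.cosh (Real.sqrt (s^2+b))) := by
    have hC := Real.hasSum_cosh (Real.sqrt (s^2+b))
    have hterm : ∀ k : ℕ, (Real.sqrt (s^2+b))^(2*k) / ((2*k).factorial)
        = ∑ p ∈ Finset.HasAntidiagonal.antidiagonal k, trm b s p := by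
      intro k
      have hsq : (Real.sqrt (s^2+b))^(2*k) = (s^2+b)^k := by
        rw [pow_mul, Real.sq_sqrt (by positivity)]
      rw [hsq, add_pow, Finset.Nat.sum_antidiagonal_eq_sum_range_succ_mk, Finset.sum_div]
      apply Finset.sum_congr rfl
      intro m hm
      have hmk : m ≤ k := Nat.lt_succ_iff.mp (Finset.mem_range.mp hm)
      unfold trm
      simp only
      have e1 : m + (k - m) = k := by omega
      have e2 : 2*m + 2*(k-m) = 2*k := by omega
      rw [e1, e2, pow_mul]
      ring
    -- convert hC to sum over antidiagonals
    have hC' : HasSum (fun k => ∑ p ∈ Finset.HasAntidiagonal.antidiagonal k, trm b s p)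
        (Real.cosh (Real.sqrt (s^2+b))) := hC.congr_fun (fun k => (hterm k).symm)
    -- distribute over sigma
    have hsig : Summable (fun x : Σ n : ℕ, Finset.HasAntidiagonal.antidiagonal n => trm b s ((Finset.HasAntidiagonal.sigmaAntidiagonalEquivProd (A := ℕ)) x)) :=
      hsumm.comp_injective (Finset.HasAntidiagonal.sigmaAntidiagonalEquivProd (A := ℕ)).injective
    have ht1 : ∑' p : ℕ × ℕ, trm b s p = ∑' x : (Σ n : ℕ, Finset.HasAntidiagonal.antidiagonal n), trm b s ((Finset.HasAntidiagonal.sigmaAntidiagonalEquivProd (A := ℕ)) x) :=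
      ((Finset.HasAntidiagonal.sigmaAntidiagonalEquivProd (A := ℕ)).tsum_eq (trm b s)).symm
    have ht2 := Summable.tsum_sigma hsig
    have ht3 : ∀ k : ℕ, (∑' c : Finset.HasAntidiagonal.antidiagonal k, trm b s ((Finset.HasAntidiagonal.sigmaAntidiagonalEquivProd (A := ℕ)) ⟨k, c⟩))
        = ∑ p ∈ Finset.HasAntidiagonal.antidiagonal k, trm b s p := fun k => by
      exact Finset.tsum_subtype (Finset.HasAntidiagonal.antidiagonal k) (trm b s)
    have hfin := hsumm.hasSum
    rw [ht1, ht2] at hfin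
    simp_rw [ht3] at hfin
    rwa [hC'.tsum_eq] at hfin
  -- step 2 : fiberwise over second coordinate
  have h1' : HasSum (fun q : ℕ × ℕ => trm b s (q.2, q.1)) (Real.cosh (Real.sqrt (s^2+b))) := by
    have := (Equiv.prodComm ℕ ℕ).hasSum_iff (f := trm b s)
      (a := Real.cosh (Real.sqrt (s^2+b)))
    exact this.2 h1
  have h2 : HasSum (fun n : ℕ => trm b s (n, 0)) (Real.cosh s) := by
    apply (Real.hasSum_cosh s).congr_fun
    intro n
    unfold trm
    norm_num
  have h3 : ∀ j : ℕ, HasSum (fun n : ℕ => trm b s (n, j+1)) (co b j * Gb j s) := by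
    intro j
    have := (hasSum_G j s).mul_left (co b j)
    apply this.congr_fun
    intro n
    rw [I_closed j n]
    unfold trm co
    simp only
    have hch : ((n+(j+1)).choose n : ℝ) * (n.factorial * (j+1).factorial)
        = ((n+j+1).factorial : ℝ) := by
      have h := Nat.add_choose_mul_factorial_mul_factorial n (j+1)
      have : (n+(j+1)).choose n * (n.factorial * (j+1).factorial) = (n+(j+1)).factorial := by
        rw [Nat.choose_symm_add, ← h]; ring
      calc ((n+(j+1)).choose n : ℝ) * (n.factorial * (j+1).factorial)
          = ((n+(j+1)).choose n * (n.factorial * (j+1).factorial) : ℕ) := by push_cast; try ring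
        _ = ((n+j+1).factorial : ℝ) := by rw [this]; norm_cast
    have e3 : 2*n+2*(j+1) = 2*n+2*j+2 := by ring
    rw [e3]
    have hne1 : ((2*n).factorial : ℝ) ≠ 0 := by positivity
    have hne2 : ((2*n+2*j+2).factorial : ℝ) ≠ 0 := by positivity
    have hne3 : (n.factorial : ℝ) ≠ 0 := by positivity
    have hne4 : ((j+1).factorial : ℝ) ≠ 0 := by positivity
    have hne5 : (j.factorial : ℝ) ≠ 0 := by positivity
    have hne6 : (4:ℝ)^(j+1) ≠ 0 := by positivity
    field_simp
    rw [← add_assoc] at hch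
    linear_combination (b^(j+1) * s^(2*n)) * hch
  -- assemble
  set g : ℕ → ℝ := fun j => Nat.casesOn j (Real.cosh s) (fun i => co b i * Gb i s) with hgdef
  have hg : HasSum g (Real.cosh (Real.sqrt (s^2+b))) := by
    apply h1'.prod_fiberwise
    intro j
    cases j with
    | zero => exact h2
    | succ i => exact h3 i
  have := (hasSum_nat_add_iff' (f := g) 1).2 hg
  simp only [Finset.range_one, Finset.sum_singleton] at this
  exact this

lemma co_nonneg {b : ℝ} (hb : 0 ≤ b) (j : ℕ) : 0 ≤ co b j := by
  unfold co; positivity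

/-- weighted rank-one sum identity -/
lemma rank1w {N : ℕ} (g : Fin N → ℝ) (w : ℝ) (ξ : Fin N → ℂ) :
    ∑ r, ∑ s', (ξ r * (starRingEnd ℂ) (ξ s') * ((g r * g s' * w : ℝ) : ℂ))
      = ((Complex.normSq (∑ r, ξ r * (g r : ℂ)) * w : ℝ) : ℂ) := by
  have hconj : (starRingEnd ℂ) (∑ r, ξ r * (g r : ℂ))
      = ∑ s', (starRingEnd ℂ) (ξ s') * ((g s' : ℝ) : ℂ) := by
    rw [map_sum]
    apply Finset.sum_congr rfl
    intro s' _
    rw [map_mul, Complex.conj_ofReal]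
  have h2 : ((Complex.normSq (∑ r, ξ r * (g r : ℂ)) * w : ℝ) : ℂ)
      = (∑ r, ξ r * (g r : ℂ)) * (∑ s', (starRingEnd ℂ) (ξ s') * ((g s' : ℝ) : ℂ)) * (w : ℂ) := by
    rw [← hconj, Complex.mul_conj]
    push_cast
    ring
  rw [h2, Finset.sum_mul_sum, Finset.sum_mul]
  apply Finset.sum_congr rfl
  intro r _
  rw [Finset.sum_mul]
  apply Finset.sum_congr rfl
  intro s' _
  push_cast
  ring

lemma G_psd {N : ℕ} (j : ℕ) (x : Fin N → ℝ) (ξ : Fin N → ℂ) :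
    ∃ R : ℝ, 0 ≤ R ∧
      ∑ r, ∑ s', (ξ r * (starRingEnd ℂ) (ξ s') * ((Gb j (x r + x s') : ℝ) : ℂ)) = (R : ℂ) := by
  have h12 : (-1:ℝ) ≤ 1 := by norm_num
  refine ⟨∫ u in Set.Ioc (-1:ℝ) 1,
      Complex.normSq (∑ r, ξ r * (Real.exp (x r * u) : ℂ)) * (1-u^2)^j, ?_, ?_⟩
  · apply setIntegral_nonneg measurableSet_Ioc
    intro u hu
    have h1 : (0:ℝ) ≤ 1 - u^2 := by nlinarith [hu.1, hu.2]
    exact mul_nonneg (Complex.normSq_nonneg _) (pow_nonneg h1 j)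
  · have hterm : ∀ r s' : Fin N,
        ξ r * (starRingEnd ℂ) (ξ s') * ((Gb j (x r + x s') : ℝ) : ℂ)
          = ∫ u in Set.Ioc (-1:ℝ) 1,
              ξ r * (starRingEnd ℂ) (ξ s')
                * ((Real.exp (x r * u) * Real.exp (x s' * u) * (1-u^2)^j : ℝ) : ℂ) := by
      intro r s'
      rw [MeasureTheory.integral_const_mul]
      congr 1
      unfold Gb
      rw [intervalIntegral.integral_of_le h12]
      have hre : (∫ u in Set.Ioc (-1:ℝ) 1, Real.exp ((x r + x s')*u) * (1-u^2)^j)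
          = ∫ u in Set.Ioc (-1:ℝ) 1, Real.exp (x r * u) * Real.exp (x s' * u) * (1-u^2)^j := by
        apply MeasureTheory.integral_congr_ae
        filter_upwards with u
        rw [← Real.exp_add, ← add_mul]
      rw [hre]
      exact (_root_.integral_ofReal).symm
    have hint : ∀ r s' : Fin N, Integrable (fun u : ℝ =>
        ξ r * (starRingEnd ℂ) (ξ s')
          * ((Real.exp (x r * u) * Real.exp (x s' * u) * (1-u^2)^j : ℝ) : ℂ))
        (volume.restrict (Set.Ioc (-1:ℝ) 1)) := by
      intro r s'
      apply Integrable.const_mul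
      have : Continuous (fun u : ℝ =>
          ((Real.exp (x r * u) * Real.exp (x s' * u) * (1-u^2)^j : ℝ) : ℂ)) := by fun_prop
      exact this.integrableOn_Ioc
    calc ∑ r, ∑ s', (ξ r * (starRingEnd ℂ) (ξ s') * ((Gb j (x r + x s') : ℝ) : ℂ))
        = ∑ r, ∑ s', ∫ u in Set.Ioc (-1:ℝ) 1,
            ξ r * (starRingEnd ℂ) (ξ s')
              * ((Real.exp (x r * u) * Real.exp (x s' * u) * (1-u^2)^j : ℝ) : ℂ) := by
          exact Finset.sum_congr rfl fun r _ => Finset.sum_congr rfl fun s' _ => hterm r s'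
      _ = ∫ u in Set.Ioc (-1:ℝ) 1, ∑ r, ∑ s',
            ξ r * (starRingEnd ℂ) (ξ s')
              * ((Real.exp (x r * u) * Real.exp (x s' * u) * (1-u^2)^j : ℝ) : ℂ) := by
          rw [MeasureTheory.integral_finset_sum]
          · apply Finset.sum_congr rfl
            intro r _
            rw [MeasureTheory.integral_finset_sum]
            intro s' _
            exact hint r s'
          · intro r _
            exact integrable_finset_sum _ (fun s' _ => hint r s')
      _ = ∫ u in Set.Ioc (-1:ℝ) 1,
            ((Complex.normSq (∑ r, ξ r * (Real.exp (x r * u) : ℂ)) * (1-u^2)^j : ℝ) : ℂ) := by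
          apply MeasureTheory.integral_congr_ae
          filter_upwards with u
          exact rank1w (fun r => Real.exp (x r * u)) ((1-u^2)^j) ξ
      _ = _ := _root_.integral_ofReal

theorem stmt2 (a b : ℝ) (ha : 0 ≤ a) (hb : 0 ≤ b) :
    ExpConvex (fun t : ℝ => Real.cosh (Real.sqrt (a * t ^ 2 + b))) := by
  constructor
  · fun_prop
  intro N t ξ
  set x : Fin N → ℝ := fun r => Real.sqrt a * t r with hx
  -- summability of the real coefficient series, for each argument
  have hsummR : ∀ s0 : ℝ, Summable (fun j : ℕ => co b j * Gb j s0) :=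
    fun s0 => (key_hasSum hb s0).summable
  have hsummC : ∀ (r s' : Fin N), Summable (fun j : ℕ =>
      ξ r * (starRingEnd ℂ) (ξ s') * ((co b j * Gb j (x r + x s') : ℝ) : ℂ)) := by
    intro r s'
    apply Summable.mul_left
    exact (Complex.summable_ofReal).2 (hsummR (x r + x s'))
  -- pointwise decomposition
  have hpt : ∀ r s' : Fin N,
      (Real.cosh (Real.sqrt (a * (t r + t s') ^ 2 + b)) : ℂ) * ξ r * (starRingEnd ℂ) (ξ s')
        = ξ r * (starRingEnd ℂ) (ξ s') * ((Real.cosh (x r) * Real.cosh (x s') * 1 : ℝ) : ℂ)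
          + ξ r * (starRingEnd ℂ) (ξ s') * ((Real.sinh (x r) * Real.sinh (x s') * 1 : ℝ) : ℂ)
          + ∑' j : ℕ, ξ r * (starRingEnd ℂ) (ξ s') * ((co b j * Gb j (x r + x s') : ℝ) : ℂ) := by
    intro r s'
    have harg : a * (t r + t s') ^ 2 + b = (x r + x s') ^ 2 + b := by
      rw [hx]
      simp only
      rw [← mul_add, mul_pow, Real.sq_sqrt ha]
    have hrepr : Real.cosh (Real.sqrt (a * (t r + t s') ^ 2 + b))
        = Real.cosh (x r + x s') + ∑' j : ℕ, co b j * Gb j (x r + x s') := by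
      rw [harg, (key_hasSum hb (x r + x s')).tsum_eq]
      ring
    rw [hrepr, Real.cosh_add, Complex.ofReal_add, Complex.ofReal_add, Complex.ofReal_tsum]
    rw [add_mul, add_mul, add_mul, add_mul]
    have htsum : (∑' j : ℕ, ((co b j * Gb j (x r + x s') : ℝ) : ℂ)) * ξ r * (starRingEnd ℂ) (ξ s')
        = ∑' j : ℕ, ξ r * (starRingEnd ℂ) (ξ s') * ((co b j * Gb j (x r + x s') : ℝ) : ℂ) := by
      rw [← tsum_mul_right, ← tsum_mul_right]
      apply tsum_congr
      intro j
      push_cast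
      ring
    rw [htsum]
    push_cast
    ring
  rw [Finset.sum_congr rfl (fun r _ => Finset.sum_congr rfl (fun s' _ => hpt r s'))]
  simp only [Finset.sum_add_distrib]
  -- three pieces
  have hcosh := rank1w (fun r => Real.cosh (x r)) 1 ξ
  have hsinh := rank1w (fun r => Real.sinh (x r)) 1 ξ
  -- tsum piece: swap sums
  have hswap : ∑ r, ∑ s', (∑' j : ℕ, ξ r * (starRingEnd ℂ) (ξ s')
        * ((co b j * Gb j (x r + x s') : ℝ) : ℂ))
      = ∑' j : ℕ, ∑ r, ∑ s', ξ r * (starRingEnd ℂ) (ξ s')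
        * ((co b j * Gb j (x r + x s') : ℝ) : ℂ) := by
    have h1 : ∀ r : Fin N, (∑ s', ∑' j : ℕ, ξ r * (starRingEnd ℂ) (ξ s')
          * ((co b j * Gb j (x r + x s') : ℝ) : ℂ))
        = ∑' j : ℕ, ∑ s', ξ r * (starRingEnd ℂ) (ξ s')
          * ((co b j * Gb j (x r + x s') : ℝ) : ℂ) :=
      fun r => (Summable.tsum_finsetSum (fun s' _ => hsummC r s')).symm
    rw [Finset.sum_congr rfl (fun r _ => h1 r)]
    exact (Summable.tsum_finsetSum (fun r _ => summable_sum (fun s' _ => hsummC r s'))).symm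
  rw [hcosh, hsinh, hswap]
  have hG := fun j => G_psd (N := N) j x ξ
  choose R hR0 hReq using hG
  have hTj : ∀ j : ℕ, (∑ r, ∑ s', ξ r * (starRingEnd ℂ) (ξ s')
        * ((co b j * Gb j (x r + x s') : ℝ) : ℂ)) = ((co b j * R j : ℝ) : ℂ) := by
    intro j
    have hfac : ∀ r s' : Fin N, ξ r * (starRingEnd ℂ) (ξ s')
          * ((co b j * Gb j (x r + x s') : ℝ) : ℂ)
        = ((co b j : ℝ) : ℂ) * (ξ r * (starRingEnd ℂ) (ξ s') * ((Gb j (x r + x s') : ℝ) : ℂ)) := by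
      intro r s'
      push_cast
      ring
    rw [Finset.sum_congr rfl (fun r _ => Finset.sum_congr rfl (fun s' _ => hfac r s'))]
    simp_rw [← Finset.mul_sum]
    rw [hReq j]
    push_cast
    ring
  rw [tsum_congr hTj, ← Complex.ofReal_tsum, ← Complex.ofReal_add, ← Complex.ofReal_add]
  rw [Complex.zero_le_real]
  have h3 : 0 ≤ ∑' j : ℕ, co b j * R j :=
    tsum_nonneg (fun j => mul_nonneg (co_nonneg hb j) (hR0 j))
  have h4 : 0 ≤ Complex.normSq (∑ r, ξ r * (Real.cosh (x r) : ℂ)) * 1 :=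
    mul_nonneg (Complex.normSq_nonneg _) zero_le_one
  have h5 : 0 ≤ Complex.normSq (∑ r, ξ r * (Real.sinh (x r) : ℂ)) * 1 :=
    mul_nonneg (Complex.normSq_nonneg _) zero_le_one
  exact add_nonneg (add_nonneg h4 h5) h3
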